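/- Let v1,...,v6 be points in general position in the plane forming a 6-cycle with straight-line edges e_i = segment v_i v_{i+1} (indices mod 6). If e_1 crosses each of e_3, e_4, and e_5, then e_2 does not cross e_6. -/

import Mathlib

noncomputable section

/-- A point of the plane. -/
abbrev Pt : Type := ℝ × ℝ

/-- Two straight segments cross: they meet at a point interior to both. -/
def SegCross (p q r s : Pt) : Prop :=
  (openSegment ℝ p q ∩ openSegment ℝ r s).Nonempty

/-- Points in general position: distinct, and no three collinear. -/
def GenPos {V : Type*} (pos : V → Pt) : Prop :=
  Function.Injective pos ∧
    ∀ a b c : V, a ≠ b → b ≠ c → a ≠ c →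
      ¬ Collinear ℝ ({pos a, pos b, pos c} : Set Pt)

/-- For a geometric 6-cycle with edges `e₁ = v0v1, …, e₅ = v4v5, e₆ = v5v0`:
if `e₁` crosses each of `e₃`, `e₄`, `e₅`, then `e₂` does not cross `e₆`. -/
theorem c6_crossing_rule (v : Fin 6 → Pt) (hgen : GenPos v)
    (h13 : SegCross (v 0) (v 1) (v 2) (v 3))
    (h14 : SegCross (v 0) (v 1) (v 3) (v 4))
    (h15 : SegCross (v 0) (v 1) (v 4) (v 5)) :
    ¬ SegCross (v 1) (v 2) (v 5) (v 0) := by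
  obtain ⟨hinj, hcol⟩ := hgen
  set A : Pt := v 0 with hAdef
  set B : Pt := v 1 with hBdef
  set f : Pt → ℝ := fun p => (B.1 - A.1) * (p.2 - A.2) - (B.2 - A.2) * (p.1 - A.1)
    with hfdef
  have haff : ∀ (a b : Pt) (t : ℝ),
      f ((1 - t) • a + t • b) = (1 - t) * f a + t * f b := by
    intro a b t
    simp only [hfdef, Prod.fst_add, Prod.snd_add, Prod.smul_fst, Prod.smul_snd,
      smul_eq_mul]
    ring
  have hfA : f A = 0 := by simp [hfdef]
  have hfB : f B = 0 := by simp only [hfdef]; ring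
  have hAB : A ≠ B := by
    intro h
    exact absurd (hinj h) (by decide)
  -- no other vertex is on the line AB
  have hne : ∀ i : Fin 6, i ≠ 0 → i ≠ 1 → f (v i) ≠ 0 := by
    intro i h0 h1 hf0
    refine hcol 0 1 i (by decide) (fun h => h1 h.symm) (fun h => h0 h.symm) ?_
    have hmem : A ∈ ({A, B, v i} : Set Pt) := by simp
    rw [collinear_iff_of_mem hmem]
    refine ⟨B - A, ?_⟩
    intro p hp
    have hd : (B.1 - A.1) ^ 2 + (B.2 - A.2) ^ 2 ≠ 0 := by
      intro h
      apply hAB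
      have h1 : B.1 - A.1 = 0 := by nlinarith [sq_nonneg (B.1 - A.1), sq_nonneg (B.2 - A.2)]
      have h2 : B.2 - A.2 = 0 := by nlinarith [sq_nonneg (B.1 - A.1), sq_nonneg (B.2 - A.2)]
      have : A.1 = B.1 := by linarith
      have : A.2 = B.2 := by linarith
      exact Prod.ext (by linarith) (by linarith)
    rcases hp with rfl | rfl | rfl
    · exact ⟨0, by simp⟩
    · refine ⟨1, ?_⟩
      simp [vadd_eq_add]
    · refine ⟨((B.1 - A.1) * (v i).1 - (B.1 - A.1) * A.1 +
        ((B.2 - A.2) * (v i).2 - (B.2 - A.2) * A.2)) / ((B.1 - A.1) ^ 2 + (B.2 - A.2) ^ 2), ?_⟩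
      have hf0' : (B.1 - A.1) * ((v i).2 - A.2) - (B.2 - A.2) * ((v i).1 - A.1) = 0 := hf0
      refine Prod.ext ?_ ?_ <;>
        simp only [vadd_eq_add, Prod.fst_add, Prod.snd_add, Prod.smul_fst, Prod.smul_snd,
          Prod.fst_sub, Prod.snd_sub, smul_eq_mul] <;>
        field_simp
      · linear_combination (-(B.2 - A.2)) * hf0'
      · linear_combination (B.1 - A.1) * hf0'
  -- a segment crossing the open segment AB has endpoints of opposite f-sign
  have key : ∀ a b : Pt, (openSegment ℝ A B ∩ openSegment ℝ a b).Nonempty →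
      f a ≠ 0 → f b ≠ 0 → f a * f b < 0 := by
    intro a b ⟨x, hx1, hx2⟩ hfa hfb
    rw [openSegment_eq_image] at hx1 hx2
    obtain ⟨s, hs, hxs⟩ := hx1
    obtain ⟨t, ht, hxt⟩ := hx2
    dsimp only at hxs hxt
    have h0 : f ((1 - s) • A + s • B) = 0 := by
      rw [haff, hfA, hfB]; ring
    have h1 : (1 - t) * f a + t * f b = 0 := by
      rw [← haff, hxt, ← hxs, h0]
    rcases lt_trichotomy (f a * f b) 0 with h | h | h
    · exact h
    · exact absurd (mul_eq_zero.mp h) (by tauto)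
    · exfalso
      obtain ⟨ht0, ht1⟩ := ht
      have hq : (1 - t) * (f a * f b) + t * (f b) ^ 2 = 0 := by
        linear_combination f b * h1
      have h2 : 0 < (1 - t) * (f a * f b) := mul_pos (by linarith) h
      have h3 : 0 ≤ t * (f b) ^ 2 := mul_nonneg ht0.le (sq_nonneg _)
      linarith
  have f2 := hne 2 (by decide) (by decide)
  have f3 := hne 3 (by decide) (by decide)
  have f4 := hne 4 (by decide) (by decide)
  have f5 := hne 5 (by decide) (by decide)
  have h23 : f (v 2) * f (v 3) < 0 := key _ _ h13 f2 f3
  have h34 : f (v 3) * f (v 4) < 0 := key _ _ h14 f3 f4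
  have h45 : f (v 4) * f (v 5) < 0 := key _ _ h15 f4 f5
  have h25 : f (v 2) * f (v 5) < 0 := by
    clear_value f
    nlinarith [mul_pos_of_neg_of_neg h23 h34, sq_nonneg (f (v 3)), sq_nonneg (f (v 4)),
      mul_pos (mul_pos_of_neg_of_neg h23 h34) (neg_pos.mpr h45)]
  rintro ⟨x, hx1, hx2⟩
  rw [openSegment_eq_image] at hx1 hx2
  obtain ⟨t, ⟨ht0, ht1⟩, hxt⟩ := hx1
  obtain ⟨s, ⟨hs0, hs1⟩, hxs⟩ := hx2
  dsimp only at hxt hxs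
  have e1 : f x = t * f (v 2) := by
    rw [← hxt, haff, hfB]; ring
  have e2 : f x = (1 - s) * f (v 5) := by
    rw [← hxs, haff, hfA]; ring
  have hq1 : f x * f (v 5) = t * (f (v 2) * f (v 5)) := by linear_combination f (v 5) * e1
  have hq2 : f x * f (v 5) = (1 - s) * (f (v 5)) ^ 2 := by linear_combination f (v 5) * e2
  have h2 : t * (f (v 2) * f (v 5)) < 0 := mul_neg_of_pos_of_neg ht0 h25
  have h3 : 0 ≤ (1 - s) * (f (v 5)) ^ 2 := mul_nonneg (by linarith) (sq_nonneg _)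
  linarith
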